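/- Fix r ≥ 2 and x in the interior of the simplex Δ_r. Then Σ_{i=1}^r x_i g_i(x) ≤ 1/r. If r = 2, equality holds for every x ∈ Δ_2. If r ≥ 3, equality holds if and only if x = (1/r, …, 1/r). -/

import Mathlib

open MeasureTheory ProbabilityTheory Filter Real Topology

open scoped Classical

namespace ThompsonStability

variable {Ω : Type} [MeasurableSpace Ω]

/-- The standard normal cumulative distribution function `Φ`. -/
noncomputable def gaussCDF (x : ℝ) : ℝ := ((gaussianReal 0 1) (Set.Iic x)).toReal

/-- `pullCount A a t ω` is the number of pulls `N_{a,t}` of arm `a` during rounds `1,…,t`. -/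
def pullCount {K : ℕ} (A : ℕ → Ω → Fin K) (a : Fin K) (t : ℕ) (ω : Ω) : ℕ :=
  ((Finset.Icc 1 t).filter fun s => A s ω = a).card

/-- `pullTime A a k ω` is the time `T_a(k)` of the `k`-th pull of arm `a`. -/
noncomputable def pullTime {K : ℕ} (A : ℕ → Ω → Fin K) (a : Fin K) (k : ℕ) (ω : Ω) : ℕ :=
  sInf {t | k ≤ pullCount A a t ω}

/-- The reward process `R_{a,t} = μ_a + Z_{a,t}`, where the noise `Z_{a,t}` is the
coordinate `W (t, a, false)` of the ambient i.i.d. standard Gaussian family `W`. -/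
def reward {K : ℕ} (μ : Fin K → ℝ) (W : ℕ × Fin K × Bool → Ω → ℝ)
    (t : ℕ) (a : Fin K) (ω : Ω) : ℝ := μ a + W (t, a, false) ω

/-- The empirical mean `μ̂_{a,t}` of arm `a` after `t` rounds. -/
noncomputable def empMean {K : ℕ} (A : ℕ → Ω → Fin K) (R : ℕ → Fin K → Ω → ℝ)
    (a : Fin K) (t : ℕ) (ω : Ω) : ℝ :=
  (∑ s ∈ (Finset.Icc 1 t).filter fun s => A s ω = a, R s a ω) / (pullCount A a t ω : ℝ)

/-- The sample standard deviation `σ̂_{a,t}` of the rewards of arm `a` up to time `t`,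
with the convention that it equals `1` when `N_{a,t} ≤ 1`. -/
noncomputable def sampleSD {K : ℕ} (A : ℕ → Ω → Fin K) (R : ℕ → Fin K → Ω → ℝ)
    (a : Fin K) (t : ℕ) (ω : Ω) : ℝ :=
  if pullCount A a t ω ≤ 1 then 1
  else Real.sqrt ((∑ s ∈ (Finset.Icc 1 t).filter fun s => A s ω = a,
    (R s a ω - empMean A R a t ω) ^ 2) / ((pullCount A a t ω : ℝ) - 1))

/-- The history σ-algebra `F_t`, generated by `(A_1, R_{A_1,1}, …, A_t, R_{A_t,t})`. -/
def histSigma {K : ℕ} (A : ℕ → Ω → Fin K) (R : ℕ → Fin K → Ω → ℝ) (t : ℕ) :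
    MeasurableSpace Ω :=
  MeasurableSpace.comap
    (fun ω (s : Fin t) => (A ((s : ℕ) + 1) ω, R ((s : ℕ) + 1) (A ((s : ℕ) + 1) ω) ω))
    inferInstance

/-- The Thompson sample (index) `θ_{a,t+1} = μ̂_{a,t} + √(σ(𝒜)/N_{a,t}) ζ_{a,t+1}` used by
variance-inflated Thompson sampling, where `ζ_{a,t+1} = W (t+1, a, true)` is a fresh
standard Gaussian draw, so that `θ_{a,t+1} | F_t ~ N(μ̂_{a,t}, σ(𝒜)/N_{a,t})`,
independently across arms. -/
noncomputable def tsIndex {K : ℕ} (μ : Fin K → ℝ) (W : ℕ × Fin K × Bool → Ω → ℝ)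
    (σA : ℝ) (A : ℕ → Ω → Fin K) (t : ℕ) (a : Fin K) (ω : Ω) : ℝ :=
  empMean A (reward μ W) a t ω +
    Real.sqrt (σA / (pullCount A a t ω : ℝ)) * W (t + 1, a, true) ω

/-- The index `Υ_{a,t+1} = μ̂_{a,t} + ζ_{a,t+1}/√N_{a,t} + √(2 β(𝒜) log T / N_{a,t})` used by
Thompson sampling with mean bonus (the posterior sample `θ̃_{a,t+1}` plus the bonus
`B_{a,t}`), where `ζ_{a,t+1} = W (t+1, a, true)` is a fresh standard Gaussian draw. -/
noncomputable def mbIndex {K : ℕ} (μ : Fin K → ℝ) (W : ℕ × Fin K × Bool → Ω → ℝ)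
    (βA : ℝ) (T : ℕ) (A : ℕ → Ω → Fin K) (t : ℕ) (a : Fin K) (ω : Ω) : ℝ :=
  empMean A (reward μ W) a t ω + W (t + 1, a, true) ω / Real.sqrt (pullCount A a t ω : ℝ) +
    Real.sqrt (2 * βA * Real.log T / (pullCount A a t ω : ℝ))

/-- A run of variance-inflated Thompson sampling with inflation factor `σA` on the `K`-armed
Gaussian bandit with means `μ`: `W` is an i.i.d. family of standard Gaussians furnishing both
the reward noise (`… false`) and the posterior sampling randomness (`… true`); each arm is
pulled once during the initialization rounds `1,…,K`; and for every `t ≥ K` the next arm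
`A_{t+1}` is measurable with respect to the history `F_t` together with the fresh draws
`ζ_{·,t+1}`, and maximizes the Thompson index `θ_{·,t+1}`. -/
structure VarInflTS (K : ℕ) (P : Measure Ω) (μ : Fin K → ℝ) (σA : ℝ)
    (A : ℕ → Ω → Fin K) (W : ℕ × Fin K × Bool → Ω → ℝ) : Prop where
  meas_A : ∀ t, Measurable (A t)
  meas_W : ∀ i, Measurable (W i)
  indep_W : iIndepFun W P
  gauss_W : ∀ i, Measure.map (W i) P = gaussianReal 0 1
  init : ∀ ω (a : Fin K), pullCount A a K ω = 1
  adapted : ∀ t, K ≤ t →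
    Measurable[histSigma A (reward μ W) t ⊔
      MeasurableSpace.comap (fun ω (a : Fin K) => W (t + 1, a, true) ω) inferInstance]
      (A (t + 1))
  argmax : ∀ t, K ≤ t → ∀ ω (a : Fin K),
    tsIndex μ W σA A t a ω ≤ tsIndex μ W σA A t (A (t + 1) ω) ω

/-- A run (with horizon `T`) of Thompson sampling with mean bonus, with bonus strength `βA`,
on the `K`-armed Gaussian bandit with means `μ`; fields as in `VarInflTS`, with the selected
arm maximizing the bonus-shifted index `Υ_{·,t+1}`. -/
structure MeanBonusTS (K : ℕ) (P : Measure Ω) (μ : Fin K → ℝ) (βA : ℝ) (T : ℕ)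
    (A : ℕ → Ω → Fin K) (W : ℕ × Fin K × Bool → Ω → ℝ) : Prop where
  meas_A : ∀ t, Measurable (A t)
  meas_W : ∀ i, Measurable (W i)
  indep_W : iIndepFun W P
  gauss_W : ∀ i, Measure.map (W i) P = gaussianReal 0 1
  init : ∀ ω (a : Fin K), pullCount A a K ω = 1
  adapted : ∀ t, K ≤ t →
    Measurable[histSigma A (reward μ W) t ⊔
      MeasurableSpace.comap (fun ω (a : Fin K) => W (t + 1, a, true) ω) inferInstance]
      (A (t + 1))
  argmax : ∀ t, K ≤ t → ∀ ω (a : Fin K),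
    mbIndex μ W βA T A t a ω ≤ mbIndex μ W βA T A t (A (t + 1) ω) ω

/-- The concentration event `E_T`:
`|μ̂_{a,t} − μ_a| ≤ √(C log log T / N_{a,t})` for all (post-initialization) `t ≤ T` and `a`. -/
def concEvent {K : ℕ} (μ : Fin K → ℝ) (A : ℕ → Ω → Fin K) (W : ℕ × Fin K × Bool → Ω → ℝ)
    (Cc : ℝ) (T : ℕ) : Set Ω :=
  {ω | ∀ a : Fin K, ∀ t, K ≤ t → t ≤ T →
    |empMean A (reward μ W) a t ω - μ a| ≤
      Real.sqrt (Cc * Real.log (Real.log T) / (pullCount A a t ω : ℝ))}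

/-- The few-suboptimal-pulls event `Ω_T = {N_sub(T) ≤ σ(𝒜) log T log log T}`. -/
def fewSubEvent {K : ℕ} (μ : Fin K → ℝ) (μstar : ℝ) (A : ℕ → Ω → Fin K)
    (σA : ℝ) (T : ℕ) : Set Ω :=
  {ω | ∑ b ∈ Finset.univ.filter (fun b : Fin K => μ b ≠ μstar), (pullCount A b T ω : ℝ) ≤
    σA * Real.log T * Real.log (Real.log T)}

/-- The good event `G_T = G_{T,1} ∩ G_{T,2}` for Thompson sampling with mean bonus:
`G_{T,1}` is mean concentration at scale `√(C₁ log T / N_{a,t})`, and `G_{T,2}` bounds all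
the standard normal draws used by the algorithm by `√(2 log (2 K T³))`. -/
def goodEvent {K : ℕ} (μ : Fin K → ℝ) (A : ℕ → Ω → Fin K) (W : ℕ × Fin K × Bool → Ω → ℝ)
    (C₁ : ℝ) (T : ℕ) : Set Ω :=
  {ω | (∀ a : Fin K, ∀ t, K ≤ t → t ≤ T →
      |empMean A (reward μ W) a t ω - μ a| ≤
        Real.sqrt (C₁ * Real.log T / (pullCount A a t ω : ℝ))) ∧
    (∀ a : Fin K, ∀ t ≤ T, |W (t, a, true) ω| ≤ Real.sqrt (2 * Real.log (2 * K * T ^ 3)))}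



section WinnerMapAux


notation "stdγ" => gaussianReal 0 1

instance : NullSingletonClass (stdγ) :=
  ⟨fun a => (gaussianReal_absolutelyContinuous 0 one_ne_zero) (measure_singleton a)⟩

lemma gauss_neg_map : Measure.map (fun t : ℝ => -t) stdγ = stdγ := by
  have h := gaussianReal_map_const_mul (μ := 0) (v := 1) (-1)
  have : (fun t : ℝ => -1 * t) = (fun t : ℝ => -t) := by funext t; ring
  rw [show ((-1 : ℝ) * ·) = (fun t : ℝ => -t) from this] at h
  rw [h]
  norm_num

lemma gauss_Iic_ne_top (u : ℝ) : stdγ (Set.Iic u) ≠ ⊤ := by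
  exact (measure_lt_top _ _).ne

lemma gauss_Iic_eq_ofReal (u : ℝ) : stdγ (Set.Iic u) = ENNReal.ofReal (gaussCDF u) :=
  (ENNReal.ofReal_toReal (gauss_Iic_ne_top u)).symm

lemma gaussCDF_nonneg (u : ℝ) : 0 ≤ gaussCDF u := ENNReal.toReal_nonneg

lemma gaussCDF_le_one (u : ℝ) : gaussCDF u ≤ 1 := by
  rw [gaussCDF]
  have : stdγ (Set.Iic u) ≤ 1 := prob_le_one
  simpa using ENNReal.toReal_mono (by norm_num) this

lemma gaussCDF_mono : Monotone gaussCDF := by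
  intro a b hab
  exact ENNReal.toReal_mono (gauss_Iic_ne_top b) (measure_mono (Set.Iic_subset_Iic.2 hab))

lemma measurable_gaussCDF : Measurable gaussCDF := gaussCDF_mono.measurable

lemma gauss_pos_of_volume_pos {s : Set ℝ} (hs : MeasurableSet s) (h : 0 < volume s) :
    0 < stdγ s := by
  rcases eq_or_lt_of_le (show (0 : ENNReal) ≤ stdγ s by simp) with h0 | h1
  · exfalso
    have := (gaussianReal_absolutelyContinuous' 0 one_ne_zero) h0.symm
    rw [this] at h; exact lt_irrefl _ h
  · exact h1

lemma gaussCDF_strictMono : StrictMono gaussCDF := by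
  intro a b hab
  have h1 : stdγ (Set.Iic a) + stdγ (Set.Ioc a b) = stdγ (Set.Iic b) := by
    rw [← measure_union (by exact Set.Iic_disjoint_Ioc le_rfl) measurableSet_Ioc,
      Set.Iic_union_Ioc_eq_Iic hab.le]
  have h2 : 0 < stdγ (Set.Ioc a b) := by
    apply gauss_pos_of_volume_pos measurableSet_Ioc
    rw [Real.volume_Ioc]
    simp [hab]
  have ha := gauss_Iic_ne_top a
  have hb := gauss_Iic_ne_top b
  rw [gaussCDF, gaussCDF, ← h1]
  have h2' : stdγ (Set.Ioc a b) ≠ ⊤ := (measure_lt_top _ _).ne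
  rw [ENNReal.toReal_add ha h2']
  have : 0 < (stdγ (Set.Ioc a b)).toReal := ENNReal.toReal_pos h2.ne' h2'
  linarith

lemma gaussCDF_neg (u : ℝ) : gaussCDF (-u) = 1 - gaussCDF u := by
  have hIci : stdγ (Set.Iic (-u)) = stdγ (Set.Ici u) := by
    conv_lhs => rw [← gauss_neg_map, Measure.map_apply measurable_neg measurableSet_Iic]
    congr 1
    ext t
    simp
  have hIoi : stdγ (Set.Ici u) = stdγ (Set.Ioi u) := (measure_congr Ioi_ae_eq_Ici).symm
  have hcompl : stdγ (Set.Ioi u) = 1 - stdγ (Set.Iic u) := by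
    rw [← Set.compl_Iic, measure_compl measurableSet_Iic (gauss_Iic_ne_top u), measure_univ]
  rw [gaussCDF, gaussCDF, hIci, hIoi, hcompl, ENNReal.toReal_sub_of_le prob_le_one (by norm_num)]
  norm_num

lemma gaussCDF_zero : gaussCDF 0 = 1 / 2 := by
  have h := gaussCDF_neg 0
  rw [neg_zero] at h
  linarith

lemma gaussCDF_half_le {u : ℝ} (hu : 0 ≤ u) : 1 / 2 ≤ gaussCDF u :=
  gaussCDF_zero ▸ gaussCDF_mono hu

lemma gaussCDF_half_lt {u : ℝ} (hu : 0 < u) : 1 / 2 < gaussCDF u :=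
  gaussCDF_zero ▸ gaussCDF_strictMono hu

lemma gaussCDF_pos (u : ℝ) : 0 < gaussCDF u := by
  have h2 : 0 < stdγ (Set.Ioc (u - 1) u) := by
    apply gauss_pos_of_volume_pos measurableSet_Ioc
    rw [Real.volume_Ioc]
    norm_num
  have hle : stdγ (Set.Ioc (u - 1) u) ≤ stdγ (Set.Iic u) :=
    measure_mono (fun t ht => ht.2)
  rw [gaussCDF]
  exact ENNReal.toReal_pos (lt_of_lt_of_le h2 hle).ne' (gauss_Iic_ne_top u)

lemma gaussCDF_lt_one (u : ℝ) : gaussCDF u < 1 := by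
  have := gaussCDF_pos (-u)
  rw [gaussCDF_neg] at this
  linarith



variable {ι : Type*}

lemma prod_add_prod_compl_le (s : Finset ι) (f g : ι → ℝ)
    (hg : ∀ k ∈ s, 1/2 ≤ g k) (hgf : ∀ k ∈ s, g k ≤ f k) (hf : ∀ k ∈ s, f k ≤ 1) :
    ∏ k ∈ s, g k + ∏ k ∈ s, (1 - g k) ≤ ∏ k ∈ s, f k + ∏ k ∈ s, (1 - f k) := by
  induction s using Finset.induction_on with
  | empty => simp
  | @insert a s' ha ih =>
    have hg' : ∀ k ∈ s', 1/2 ≤ g k := fun k hk => hg k (Finset.mem_insert_of_mem hk)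
    have hgf' : ∀ k ∈ s', g k ≤ f k := fun k hk => hgf k (Finset.mem_insert_of_mem hk)
    have hf' : ∀ k ∈ s', f k ≤ 1 := fun k hk => hf k (Finset.mem_insert_of_mem hk)
    have IH := ih hg' hgf' hf'
    set G := ∏ k ∈ s', g k with hG
    set G' := ∏ k ∈ s', (1 - g k) with hG'
    set F := ∏ k ∈ s', f k with hF
    set F' := ∏ k ∈ s', (1 - f k) with hF'
    have hGnn : 0 ≤ G := Finset.prod_nonneg fun k hk => by linarith [hg' k hk]
    have hF'nn : 0 ≤ F' := Finset.prod_nonneg fun k hk => by linarith [hf' k hk]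
    have hGF : G ≤ F := Finset.prod_le_prod (fun k hk => by linarith [hg' k hk]) hgf'
    have hF'G' : F' ≤ G' := Finset.prod_le_prod (fun k hk => by linarith [hf' k hk])
      (fun k hk => by linarith [hgf' k hk])
    have hF'F : F' ≤ F := Finset.prod_le_prod (fun k hk => by linarith [hf' k hk])
      (fun k hk => by linarith [hg' k hk, hgf' k hk])
    rw [Finset.prod_insert ha, Finset.prod_insert ha, Finset.prod_insert ha,
      Finset.prod_insert ha]
    have hba : g a ≤ f a := hgf a (Finset.mem_insert_self a s')
    have hbh : 1/2 ≤ g a := hg a (Finset.mem_insert_self a s')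
    have hfa : f a ≤ 1 := hf a (Finset.mem_insert_self a s')
    nlinarith [mul_nonneg (by linarith : (0:ℝ) ≤ g a - 1/2) (by linarith : (0:ℝ) ≤ F - G),
      mul_nonneg (by linarith : (0:ℝ) ≤ g a - 1/2) (by linarith : (0:ℝ) ≤ G' - F'),
      mul_nonneg (by linarith : (0:ℝ) ≤ f a - g a) (by linarith : (0:ℝ) ≤ F - F')]

lemma key_compare (s : Finset ι) (f g : ι → ℝ)
    (hg : ∀ k ∈ s, 1/2 ≤ g k) (hgf : ∀ k ∈ s, g k ≤ f k) (hf : ∀ k ∈ s, f k ≤ 1)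
    {a b : ℝ} (hb : 1/2 ≤ b) (hba : b ≤ a) (ha : a ≤ 1) :
    b * ∏ k ∈ s, g k + (1 - b) * ∏ k ∈ s, (1 - g k) ≤
      a * ∏ k ∈ s, f k + (1 - a) * ∏ k ∈ s, (1 - f k) := by
  have IH := prod_add_prod_compl_le s f g hg hgf hf
  set G := ∏ k ∈ s, g k
  set G' := ∏ k ∈ s, (1 - g k)
  set F := ∏ k ∈ s, f k
  set F' := ∏ k ∈ s, (1 - f k)
  have hGnn : 0 ≤ G := Finset.prod_nonneg fun k hk => by linarith [hg k hk]
  have hF'nn : 0 ≤ F' := Finset.prod_nonneg fun k hk => by linarith [hf k hk]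
  have hGF : G ≤ F := Finset.prod_le_prod (fun k hk => by linarith [hg k hk]) hgf
  have hF'G' : F' ≤ G' := Finset.prod_le_prod (fun k hk => by linarith [hf k hk])
    (fun k hk => by linarith [hgf k hk])
  have hF'F : F' ≤ F := Finset.prod_le_prod (fun k hk => by linarith [hf k hk])
    (fun k hk => by linarith [hg k hk, hgf k hk])
  nlinarith [mul_nonneg (by linarith : (0:ℝ) ≤ b - 1/2) (by linarith : (0:ℝ) ≤ F - G),
    mul_nonneg (by linarith : (0:ℝ) ≤ b - 1/2) (by linarith : (0:ℝ) ≤ G' - F'),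
    mul_nonneg (by linarith : (0:ℝ) ≤ a - b) (by linarith : (0:ℝ) ≤ F - F')]

lemma key_compare_strict (s : Finset ι) (hs : s.Nonempty) (f g : ι → ℝ)
    (hg : ∀ k ∈ s, 1/2 < g k) (hgf : ∀ k ∈ s, g k ≤ f k) (hf : ∀ k ∈ s, f k < 1)
    {a b : ℝ} (hb : 1/2 ≤ b) (hba : b < a) (ha : a ≤ 1) :
    b * ∏ k ∈ s, g k + (1 - b) * ∏ k ∈ s, (1 - g k) <
      a * ∏ k ∈ s, f k + (1 - a) * ∏ k ∈ s, (1 - f k) := by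
  have step1 := key_compare s f g (fun k hk => (hg k hk).le) hgf
    (fun k hk => (hf k hk).le) hb le_rfl (by linarith)
  set F := ∏ k ∈ s, f k
  set F' := ∏ k ∈ s, (1 - f k)
  have hF'F : F' < F := by
    apply Finset.prod_lt_prod_of_nonempty (fun k hk => by linarith [hf k hk]) ?_ hs
    intro k hk
    have := hg k hk; have := hgf k hk
    linarith
  have step2 : b * F + (1 - b) * F' < a * F + (1 - a) * F' := by nlinarith
  linarith







lemma subfamily_map_pi {r : ℕ} (P : Measure Ω) [IsProbabilityMeasure P]
    (Z : Fin r → Ω → ℝ) (measZ : ∀ i, Measurable (Z i))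
    (indepZ : iIndepFun Z P)
    (gaussZ : ∀ i, Measure.map (Z i) P = gaussianReal 0 1) (S : Finset (Fin r)) :
    Measure.map (fun ω (k : ↥S) => Z k ω) P = Measure.pi (fun _ => stdγ) := by
  have hW : Measurable (fun ω (k : ↥S) => Z k ω) :=
    measurable_pi_lambda _ (fun k => measZ k)
  symm
  apply Measure.pi_eq
  intro s hs
  rw [Measure.map_apply hW (MeasurableSet.univ_pi hs)]
  have hpre : (fun ω (k : ↥S) => Z k ω) ⁻¹' (Set.univ.pi s) =
      ⋂ k ∈ S, Z k ⁻¹' (fun j => if h : j ∈ S then s ⟨j, h⟩ else Set.univ) k := by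
    ext ω
    simp only [Set.mem_preimage, Set.mem_pi, Set.mem_univ, forall_true_left, Set.mem_iInter]
    constructor
    · intro h k hk
      simp only [Set.mem_preimage, dif_pos hk]
      exact h ⟨k, hk⟩
    · intro h k
      have := h k k.2
      simpa only [Set.mem_preimage, dif_pos k.2] using this
  rw [hpre, indepZ.measure_inter_preimage_eq_mul S
    (fun j hj => by simp only [dif_pos hj]; exact hs ⟨j, hj⟩)]
  rw [← Finset.prod_coe_sort]
  apply Finset.prod_congr rfl
  intro k _
  rw [← Measure.map_apply (measZ k) (by simp only [dif_pos k.2]; exact hs ⟨k, k.2⟩), gaussZ k]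
  simp only [dif_pos k.2]

lemma pair_map_prod {r : ℕ} (P : Measure Ω) [IsProbabilityMeasure P]
    (Z : Fin r → Ω → ℝ) (measZ : ∀ i, Measurable (Z i))
    (indepZ : iIndepFun Z P)
    (gaussZ : ∀ i, Measure.map (Z i) P = gaussianReal 0 1) (i : Fin r) :
    Measure.map (fun ω => (Z i ω, fun (k : ↥(Finset.univ.erase i)) => Z k ω)) P =
      (stdγ).prod (Measure.pi (fun _ : ↥(Finset.univ.erase i) => stdγ)) := by
  have hW : Measurable (fun ω (k : ↥(Finset.univ.erase i)) => Z k ω) :=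
    measurable_pi_lambda _ (fun k => measZ k)
  have hdisj : Disjoint ({i} : Finset (Fin r)) (Finset.univ.erase i) := by
    simp [Finset.disjoint_left]
  have hindep := indepZ.indepFun_finset {i} (Finset.univ.erase i) hdisj measZ
  have hindep2 : IndepFun (Z i) (fun ω (k : ↥(Finset.univ.erase i)) => Z k ω) P := by
    have := hindep.comp
      (φ := fun v : (↥({i} : Finset (Fin r)) → ℝ) => v ⟨i, Finset.mem_singleton_self i⟩)
      (ψ := id) (measurable_pi_apply _ : Measurable (fun v : (↥({i} : Finset (Fin r)) → ℝ) =>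
        v ⟨i, Finset.mem_singleton_self i⟩)) measurable_id
    exact this
  rw [(indepFun_iff_map_prod_eq_prod_map_map (measZ i).aemeasurable hW.aemeasurable).mp hindep2,
    gaussZ i, subfamily_map_pi P Z measZ indepZ gaussZ]


lemma div_le_div_iff_mul {a b u v : ℝ} (hu : 0 < u) (hv : 0 < v) :
    a / u ≤ b / v ↔ a ≤ u / v * b := by
  rw [div_le_div_iff₀ hu hv, div_mul_eq_mul_div, le_div_iff₀ hv, mul_comm b u]

lemma winner_prob_repr {r : ℕ} (P : Measure Ω) [IsProbabilityMeasure P]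
    (Z : Fin r → Ω → ℝ) (measZ : ∀ i, Measurable (Z i))
    (indepZ : iIndepFun Z P)
    (gaussZ : ∀ i, Measure.map (Z i) P = gaussianReal 0 1)
    (x : Fin r → ℝ) (hxpos : ∀ i, 0 < x i) (i : Fin r) :
    (P {ω | ∀ k, Z k ω / Real.sqrt (x k) ≤ Z i ω / Real.sqrt (x i)}).toReal =
      ∫ t, ∏ k ∈ Finset.univ.erase i,
        gaussCDF (Real.sqrt (x k) / Real.sqrt (x i) * t) ∂stdγ := by
  set c : Fin r → ℝ := fun k => Real.sqrt (x k) with hc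
  have hcpos : ∀ k, 0 < c k := fun k => Real.sqrt_pos.mpr (hxpos k)
  set E : Set (ℝ × (↥(Finset.univ.erase i) → ℝ)) :=
    {p | ∀ k : ↥(Finset.univ.erase i), p.2 k ≤ c k / c i * p.1} with hE
  have hEmeas : MeasurableSet E := by
    have : E = ⋂ k : ↥(Finset.univ.erase i), {p : ℝ × (↥(Finset.univ.erase i) → ℝ) |
        p.2 k ≤ c k / c i * p.1} := by
      ext p; simp [hE, Set.mem_iInter]
    rw [this]
    exact MeasurableSet.iInter fun k => measurableSet_le (by fun_prop) (by fun_prop)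
  have hpair : Measurable (fun ω => (Z i ω, fun (k : ↥(Finset.univ.erase i)) => Z k ω)) :=
    (measZ i).prodMk (measurable_pi_lambda _ (fun k => measZ k))
  have hset : {ω | ∀ k, Z k ω / Real.sqrt (x k) ≤ Z i ω / Real.sqrt (x i)} =
      (fun ω => (Z i ω, fun (k : ↥(Finset.univ.erase i)) => Z k ω)) ⁻¹' E := by
    ext ω
    simp only [Set.mem_setOf_eq, Set.mem_preimage, hE]
    constructor
    · intro h k
      exact (div_le_div_iff_mul (hcpos _) (hcpos _)).mp (h k)
    · intro h k
      by_cases hk : k = i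
      · subst hk; exact le_rfl
      · exact (div_le_div_iff_mul (hcpos _) (hcpos _)).mpr (h ⟨k, by simp [hk]⟩)
  rw [hset, ← Measure.map_apply hpair hEmeas,
    pair_map_prod P Z measZ indepZ gaussZ i, Measure.prod_apply hEmeas]
  have hslice : ∀ t : ℝ, (Prod.mk t ⁻¹' E) =
      Set.univ.pi (fun k : ↥(Finset.univ.erase i) => Set.Iic (c k / c i * t)) := by
    intro t
    ext w
    simp only [hE, Set.mem_setOf_eq, Set.mem_preimage, Set.mem_pi, Set.mem_univ, Set.mem_Iic,
      true_implies]
  have hlint : ∀ t : ℝ, Measure.pi (fun _ : ↥(Finset.univ.erase i) => stdγ) (Prod.mk t ⁻¹' E)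
      = ENNReal.ofReal (∏ k ∈ Finset.univ.erase i, gaussCDF (c k / c i * t)) := by
    intro t
    rw [hslice t, Measure.pi_pi]
    rw [← Finset.prod_coe_sort (Finset.univ.erase i) (fun k => gaussCDF (c k / c i * t))]
    rw [ENNReal.ofReal_prod_of_nonneg (fun k _ => gaussCDF_nonneg _)]
    exact Finset.prod_congr rfl fun k _ => gauss_Iic_eq_ofReal _
  simp_rw [hlint]
  rw [integral_eq_lintegral_of_nonneg_ae
    (ae_of_all _ (fun t => Finset.prod_nonneg fun k _ => gaussCDF_nonneg _)) ?_]
  · exact (Measurable.aestronglyMeasurable (by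
      apply Finset.measurable_prod
      intro k _
      exact measurable_gaussCDF.comp (measurable_id.const_mul _)))
  
lemma winner_prob_sum {r : ℕ} (hr : 1 ≤ r) (P : Measure Ω) [IsProbabilityMeasure P]
    (Z : Fin r → Ω → ℝ) (measZ : ∀ i, Measurable (Z i))
    (indepZ : iIndepFun Z P)
    (gaussZ : ∀ i, Measure.map (Z i) P = gaussianReal 0 1)
    (x : Fin r → ℝ) (hxpos : ∀ i, 0 < x i) :
    ∑ i, (P {ω | ∀ k, Z k ω / Real.sqrt (x k) ≤ Z i ω / Real.sqrt (x i)}).toReal = 1 := by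
  haveI : NeZero r := ⟨by omega⟩
  set c : Fin r → ℝ := fun k => Real.sqrt (x k) with hc
  have hcpos : ∀ k, 0 < c k := fun k => Real.sqrt_pos.mpr (hxpos k)
  set A : Fin r → Set Ω := fun i => {ω | ∀ k, Z k ω / c k ≤ Z i ω / c i} with hA
  have hAmeas : ∀ i, MeasurableSet (A i) := by
    intro i
    have : A i = ⋂ k, {ω | Z k ω / c k ≤ Z i ω / c i} := by
      ext ω; simp [hA, Set.mem_iInter]
    rw [this]
    exact MeasurableSet.iInter fun k =>
      measurableSet_le ((measZ k).div_const _) ((measZ i).div_const _)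
  have htie : ∀ i j : Fin r, i ≠ j → P (A i ∩ A j) = 0 := by
    intro i j hij
    have hsub : A i ∩ A j ⊆ {ω | Z i ω / c i = Z j ω / c j} := by
      rintro ω ⟨h1, h2⟩
      exact le_antisymm (h2 i) (h1 j)
    refine measure_mono_null hsub ?_
    have hpairmeas : Measurable (fun ω => (Z i ω, Z j ω)) := (measZ i).prodMk (measZ j)
    have hD : MeasurableSet {p : ℝ × ℝ | p.1 / c i = p.2 / c j} :=
      measurableSet_eq_fun (measurable_fst.div_const _) (measurable_snd.div_const _)
    have hmap : Measure.map (fun ω => (Z i ω, Z j ω)) P = (stdγ).prod stdγ := by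
      rw [(indepFun_iff_map_prod_eq_prod_map_map (measZ i).aemeasurable
        (measZ j).aemeasurable).mp (indepZ.indepFun hij), gaussZ i, gaussZ j]
    have : {ω | Z i ω / c i = Z j ω / c j}
        = (fun ω => (Z i ω, Z j ω)) ⁻¹' {p : ℝ × ℝ | p.1 / c i = p.2 / c j} := rfl
    rw [this, ← Measure.map_apply hpairmeas hD, hmap, Measure.prod_apply hD]
    have hz : ∀ t : ℝ, (stdγ) (Prod.mk t ⁻¹' {p : ℝ × ℝ | p.1 / c i = p.2 / c j}) = 0 := by
      intro t
      have : (Prod.mk t ⁻¹' {p : ℝ × ℝ | p.1 / c i = p.2 / c j}) = {c j * (t / c i)} := by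
        ext s
        simp only [Set.mem_preimage, Set.mem_setOf_eq, Set.mem_singleton_iff]
        rw [eq_div_iff (hcpos j).ne', eq_comm, mul_comm]
      rw [this]
      exact measure_singleton _
    exact (lintegral_congr hz).trans lintegral_zero
  have hcover : (⋃ i, A i) = Set.univ := by
    ext ω
    simp only [Set.mem_iUnion, Set.mem_univ, iff_true]
    obtain ⟨i, hi⟩ := Finite.exists_max (fun k => Z k ω / c k)
    exact ⟨i, hi⟩
  have hsum : ∑ i, P (A i) = 1 := by
    rw [← tsum_fintype (L := SummationFilter.unconditional _), ← measure_iUnion₀ ?_ (fun i => (hAmeas i).nullMeasurableSet), hcover,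
      measure_univ]
    intro i j hij
    exact htie i j hij
  rw [← ENNReal.toReal_sum (fun i _ => (measure_lt_top P _).ne), hsum, ENNReal.toReal_one]

lemma integral_neg_symm {p : ℝ → ℝ} (hp : AEStronglyMeasurable p stdγ) :
    ∫ t, p t ∂stdγ = ∫ t, p (-t) ∂stdγ := by
  conv_lhs => rw [← gauss_neg_map]
  rw [integral_map measurable_neg.aemeasurable (by rwa [gauss_neg_map])]

section Repr

variable {r : ℕ} (x : Fin r → ℝ)

/-- `pfun x i t` is `∏_{k ≠ i} Φ(√(x k)/√(x i) · t)`. -/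
noncomputable def pfun (i : Fin r) (t : ℝ) : ℝ :=
  ∏ k ∈ Finset.univ.erase i, gaussCDF (Real.sqrt (x k) / Real.sqrt (x i) * t)

lemma measurable_pfun (i : Fin r) : Measurable (pfun x i) :=
  Finset.measurable_prod _ fun k _ => measurable_gaussCDF.comp (measurable_id.const_mul _)

lemma pfun_nonneg (i : Fin r) (t : ℝ) : 0 ≤ pfun x i t :=
  Finset.prod_nonneg fun k _ => gaussCDF_nonneg _

lemma pfun_le_one (i : Fin r) (t : ℝ) : pfun x i t ≤ 1 :=
  Finset.prod_le_one (fun k _ => gaussCDF_nonneg _) (fun k _ => gaussCDF_le_one _)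

lemma integrable_pfun (i : Fin r) : Integrable (pfun x i) stdγ := by
  refine (integrable_const (1 : ℝ)).mono' (measurable_pfun x i).aestronglyMeasurable ?_
  refine ae_of_all _ fun t => ?_
  rw [Real.norm_eq_abs, abs_of_nonneg (pfun_nonneg x i t)]
  exact pfun_le_one x i t

variable (hxpos : ∀ i, 0 < x i)
include hxpos

lemma pfun_neg_decomp (i j : Fin r) (hij : j ≠ i) (t : ℝ) :
    pfun x i t = gaussCDF (Real.sqrt (x j) / Real.sqrt (x i) * t) *
      ∏ k ∈ (Finset.univ.erase i).erase j, gaussCDF (Real.sqrt (x k) / Real.sqrt (x i) * t) :=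
  (Finset.mul_prod_erase _ _ (Finset.mem_erase.mpr ⟨hij, Finset.mem_univ j⟩)).symm

/-- The symmetrized comparison: pointwise inequality of `p_i(t) + p_i(-t)`. -/
lemma pfun_sym_le (i j : Fin r) (hij : i ≠ j) (hxle : x j ≤ x i) (t : ℝ) :
    pfun x i t + pfun x i (-t) ≤ pfun x j t + pfun x j (-t) := by
  -- reduce to t ≥ 0
  have main : ∀ u : ℝ, 0 ≤ u → pfun x i u + pfun x i (-u) ≤ pfun x j u + pfun x j (-u) := by
    intro u hu
    set c : Fin r → ℝ := fun k => Real.sqrt (x k) with hc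
    have hcpos : ∀ k, 0 < c k := fun k => Real.sqrt_pos.mpr (hxpos k)
    have hcle : c j ≤ c i := Real.sqrt_le_sqrt hxle
    set s := (Finset.univ.erase i).erase j with hs
    have hsji : s = (Finset.univ.erase j).erase i := Finset.erase_right_comm
    have hdecompi := pfun_neg_decomp x hxpos i j (Ne.symm hij)
    have hdecompj : ∀ v : ℝ, pfun x j v = gaussCDF (c i / c j * v) *
        ∏ k ∈ s, gaussCDF (c k / c j * v) := by
      intro v
      rw [hsji]
      exact pfun_neg_decomp x hxpos j i hij v
    have hneg : ∀ (d e : ℝ), gaussCDF (d / e * (-u)) = 1 - gaussCDF (d / e * u) := by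
      intro d e
      rw [mul_neg, gaussCDF_neg]
    rw [hdecompi u, hdecompi (-u), hdecompj u, hdecompj (-u)]
    simp_rw [hneg]
    have heq1 : ∀ v : Fin r → ℝ, ∀ e : ℝ,
        (∏ k ∈ s, (1 - gaussCDF (c k / e * u))) = ∏ k ∈ s, (1 - gaussCDF (c k / e * u)) :=
      fun _ _ => rfl
    apply key_compare s (fun k => gaussCDF (c k / c j * u)) (fun k => gaussCDF (c k / c i * u))
    · exact fun k _ => gaussCDF_half_le (mul_nonneg (div_nonneg (hcpos k).le (hcpos i).le) hu)
    · intro k _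
      apply gaussCDF_mono
      exact mul_le_mul_of_nonneg_right
        (div_le_div_of_nonneg_left (hcpos k).le (hcpos j) hcle) hu
    · exact fun k _ => gaussCDF_le_one _
    · exact gaussCDF_half_le (mul_nonneg (div_nonneg (hcpos j).le (hcpos i).le) hu)
    · apply gaussCDF_mono
      exact mul_le_mul_of_nonneg_right
        (le_trans ((div_le_one (hcpos i)).mpr hcle) ((one_le_div (hcpos j)).mpr hcle)) hu
    · exact gaussCDF_le_one _
  rcases le_total 0 t with ht | ht
  · exact main t ht
  · have := main (-t) (by linarith)
    rw [neg_neg] at this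
    linarith

lemma pfun_sym_lt (hr3 : 3 ≤ r) (i j : Fin r) (hij : i ≠ j) (hxlt : x j < x i)
    {t : ℝ} (ht : 0 < t) :
    pfun x i t + pfun x i (-t) < pfun x j t + pfun x j (-t) := by
  set c : Fin r → ℝ := fun k => Real.sqrt (x k) with hc
  have hcpos : ∀ k, 0 < c k := fun k => Real.sqrt_pos.mpr (hxpos k)
  have hclt : c j < c i := Real.sqrt_lt_sqrt (hxpos j).le hxlt
  set s := (Finset.univ.erase i).erase j with hs
  have hsji : s = (Finset.univ.erase j).erase i := Finset.erase_right_comm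
  have hsne : s.Nonempty := by
    rw [← Finset.card_pos, hs, Finset.card_erase_of_mem
      (Finset.mem_erase.mpr ⟨Ne.symm hij, Finset.mem_univ j⟩), Finset.card_erase_of_mem
      (Finset.mem_univ i), Finset.card_univ, Fintype.card_fin]
    omega
  have hdecompi := pfun_neg_decomp x hxpos i j (Ne.symm hij)
  have hdecompj : ∀ v : ℝ, pfun x j v = gaussCDF (c i / c j * v) *
      ∏ k ∈ s, gaussCDF (c k / c j * v) := by
    intro v
    rw [hsji]
    exact pfun_neg_decomp x hxpos j i hij v
  have hneg : ∀ (d e : ℝ), gaussCDF (d / e * (-t)) = 1 - gaussCDF (d / e * t) := by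
    intro d e
    rw [mul_neg, gaussCDF_neg]
  rw [hdecompi t, hdecompi (-t), hdecompj t, hdecompj (-t)]
  simp_rw [hneg]
  apply key_compare_strict s hsne
    (fun k => gaussCDF (c k / c j * t)) (fun k => gaussCDF (c k / c i * t))
  · exact fun k _ => gaussCDF_half_lt (mul_pos (div_pos (hcpos k) (hcpos i)) ht)
  · intro k _
    apply gaussCDF_mono
    exact mul_le_mul_of_nonneg_right
      (div_le_div_of_nonneg_left (hcpos k).le (hcpos j) hclt.le) ht.le
  · exact fun k _ => gaussCDF_lt_one _
  · exact gaussCDF_half_le (mul_nonneg (div_nonneg (hcpos j).le (hcpos i).le) ht.le)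
  · apply gaussCDF_strictMono
    exact mul_lt_mul_of_pos_right
      (lt_of_lt_of_le ((div_lt_one (hcpos i)).mpr hclt) ((one_le_div (hcpos j)).mpr hclt.le)) ht
  · exact gaussCDF_le_one _

omit hxpos in
lemma integrable_pfun_neg (i : Fin r) : Integrable (fun t => pfun x i (-t)) stdγ := by
  refine (integrable_const (1 : ℝ)).mono'
    ((measurable_pfun x i).comp measurable_neg).aestronglyMeasurable ?_
  refine ae_of_all _ fun t => ?_
  rw [Real.norm_eq_abs, abs_of_nonneg (pfun_nonneg x i _)]
  exact pfun_le_one x i _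

omit hxpos in
lemma pfun_integral_half (i : Fin r) :
    ∫ t, pfun x i t ∂stdγ = 1 / 2 * ∫ t, (pfun x i t + pfun x i (-t)) ∂stdγ := by
  rw [integral_add (integrable_pfun x i) (integrable_pfun_neg x i),
    ← integral_neg_symm (measurable_pfun x i).aestronglyMeasurable]
  ring

lemma pfun_integral_le (i j : Fin r) (hij : i ≠ j) (hxle : x j ≤ x i) :
    ∫ t, pfun x i t ∂stdγ ≤ ∫ t, pfun x j t ∂stdγ := by
  rw [pfun_integral_half x i, pfun_integral_half x j]
  have hmono : ∫ t, (pfun x i t + pfun x i (-t)) ∂stdγ ≤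
      ∫ t, (pfun x j t + pfun x j (-t)) ∂stdγ :=
    integral_mono ((integrable_pfun x i).add (integrable_pfun_neg x i))
      ((integrable_pfun x j).add (integrable_pfun_neg x j))
      (fun t => pfun_sym_le x hxpos i j hij hxle t)
  linarith

lemma pfun_integral_lt (hr3 : 3 ≤ r) (i j : Fin r) (hij : i ≠ j) (hxlt : x j < x i) :
    ∫ t, pfun x i t ∂stdγ < ∫ t, pfun x j t ∂stdγ := by
  rw [pfun_integral_half x i, pfun_integral_half x j]
  set f : ℝ → ℝ := fun t =>
    (pfun x j t + pfun x j (-t)) - (pfun x i t + pfun x i (-t)) with hf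
  have hfnn : 0 ≤ f := fun t => by
    have := pfun_sym_le x hxpos i j hij hxlt.le t
    simp only [hf, Pi.zero_apply]
    linarith
  have hfint : Integrable f stdγ :=
    (((integrable_pfun x j).add (integrable_pfun_neg x j)).sub
      ((integrable_pfun x i).add (integrable_pfun_neg x i)))
  have hsupp : Set.Ioi (0:ℝ) ⊆ Function.support f := by
    intro t ht
    have := pfun_sym_lt x hxpos hr3 i j hij hxlt (Set.mem_Ioi.mp ht)
    simp only [hf, Function.mem_support]
    intro h0
    rw [sub_eq_zero] at h0
    linarith
  have hpos : 0 < ∫ t, f t ∂stdγ := by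
    rw [integral_pos_iff_support_of_nonneg hfnn hfint]
    refine lt_of_lt_of_le ?_ (measure_mono hsupp)
    apply gauss_pos_of_volume_pos measurableSet_Ioi
    rw [Real.volume_Ioi]
    exact ENNReal.zero_lt_top
  have heq : ∫ t, f t ∂stdγ = (∫ t, (pfun x j t + pfun x j (-t)) ∂stdγ)
      - ∫ t, (pfun x i t + pfun x i (-t)) ∂stdγ :=
    integral_sub ((integrable_pfun x j).add (integrable_pfun_neg x j))
      ((integrable_pfun x i).add (integrable_pfun_neg x i))
  rw [heq] at hpos
  linarith

omit hxpos in
lemma pfun_integral_r2 (hr2 : r = 2) (i j : Fin r) (hij : i ≠ j) :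
    ∫ t, pfun x i t ∂stdγ = 1 / 2 := by
  have herase : Finset.univ.erase i = {j} := by
    apply Finset.eq_singleton_iff_unique_mem.mpr
    constructor
    · exact Finset.mem_erase.mpr ⟨Ne.symm hij, Finset.mem_univ j⟩
    · intro k hk
      have hki := (Finset.mem_erase.mp hk).1
      have h1 : (k : ℕ) < r := k.2
      have h2 : (i : ℕ) < r := i.2
      have h3 : (j : ℕ) < r := j.2
      have h4 : (k : ℕ) ≠ (i : ℕ) := fun h => hki (Fin.ext h)
      have h5 : (i : ℕ) ≠ (j : ℕ) := fun h => hij (Fin.ext h)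
      apply Fin.ext
      omega
  have hp : ∀ t : ℝ, pfun x i t + pfun x i (-t) = 1 := by
    intro t
    rw [pfun, pfun, herase, Finset.prod_singleton, Finset.prod_singleton, mul_neg, gaussCDF_neg]
    ring
  rw [pfun_integral_half x i]
  simp_rw [hp]
  simp

end Repr

lemma double_sum_identity {r : ℕ} (x g : Fin r → ℝ) :
    ∑ i, ∑ j, (x i - x j) * (g i - g j) =
      2 * r * (∑ i, x i * g i) - 2 * (∑ i, x i) * (∑ i, g i) := by
  have hinner : ∀ i, ∑ j, (x i - x j) * (g i - g j) =
      (r : ℝ) * (x i * g i) - x i * (∑ j, g j) - (∑ j, x j) * g i + ∑ j, x j * g j := by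
    intro i
    have : ∀ j, (x i - x j) * (g i - g j) =
        x i * g i - x i * g j - x j * g i + x j * g j := fun j => by ring
    simp_rw [this, Finset.sum_add_distrib, Finset.sum_sub_distrib, Finset.sum_const,
      Finset.card_univ, Fintype.card_fin, nsmul_eq_mul, ← Finset.mul_sum, ← Finset.sum_mul]
  simp_rw [hinner, Finset.sum_add_distrib, Finset.sum_sub_distrib, Finset.sum_const,
    Finset.card_univ, Fintype.card_fin, nsmul_eq_mul, ← Finset.mul_sum, ← Finset.sum_mul]
  ring


end WinnerMapAux

/-- **Lemma (dot-product inequality for the pure-noise winner map).**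
Let `r ≥ 2`, let `x` lie in the interior of the simplex `Δ_r`, and let `Z_1,…,Z_r` be i.i.d.
standard normals. With `U_i(x) = Z_i/√(x_i)` and `g_i(x) = P(U_i(x) = max_j U_j(x))`, one has
`∑ i, x_i g_i(x) ≤ 1/r`; if `r = 2` equality holds (for every such `x`), and if `r ≥ 3`
equality holds if and only if `x = (1/r, …, 1/r)`. -/
theorem winner_map_dot_product
    {r : ℕ} (hr : 2 ≤ r) (P : Measure Ω) [IsProbabilityMeasure P]
    (Z : Fin r → Ω → ℝ) (measZ : ∀ i, Measurable (Z i))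
    (indepZ : iIndepFun Z P)
    (gaussZ : ∀ i, Measure.map (Z i) P = gaussianReal 0 1)
    (x : Fin r → ℝ) (hxpos : ∀ i, 0 < x i) (hxsum : ∑ i, x i = 1) :
    (∑ i, x i *
        (P {ω | ∀ k, Z k ω / Real.sqrt (x k) ≤ Z i ω / Real.sqrt (x i)}).toReal ≤ 1 / r) ∧
    (r = 2 →
      ∑ i, x i *
        (P {ω | ∀ k, Z k ω / Real.sqrt (x k) ≤ Z i ω / Real.sqrt (x i)}).toReal = 1 / r) ∧
    (3 ≤ r →
      ((∑ i, x i *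
          (P {ω | ∀ k, Z k ω / Real.sqrt (x k) ≤ Z i ω / Real.sqrt (x i)}).toReal = 1 / r) ↔
        ∀ i, x i = 1 / r)) := by
  haveI : NeZero r := ⟨by omega⟩
  set g : Fin r → ℝ := fun i =>
    (P {ω | ∀ k, Z k ω / Real.sqrt (x k) ≤ Z i ω / Real.sqrt (x i)}).toReal with hgdef
  have hrepr : ∀ i, g i = ∫ t, pfun x i t ∂stdγ := fun i =>
    winner_prob_repr P Z measZ indepZ gaussZ x hxpos i
  have hg1 : ∑ i, g i = 1 := winner_prob_sum (by omega) P Z measZ indepZ gaussZ x hxpos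
  have hrpos : (0:ℝ) < r := by positivity
  have hmono : ∀ i j, x j ≤ x i → g i ≤ g j := by
    intro i j hle
    by_cases hij : i = j
    · subst hij; exact le_rfl
    · rw [hrepr i, hrepr j]
      exact pfun_integral_le x hxpos i j hij hle
  have hstrict : 3 ≤ r → ∀ i j, x j < x i → g i < g j := by
    intro hr3 i j hlt
    have hij : i ≠ j := fun h => by subst h; exact lt_irrefl _ hlt
    rw [hrepr i, hrepr j]
    exact pfun_integral_lt x hxpos hr3 i j hij hlt
  have hr2eq : r = 2 → ∀ i j, g i = g j := by
    intro hr2 i j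
    by_cases hij : i = j
    · subst hij; rfl
    · rw [hrepr i, hrepr j, pfun_integral_r2 x hr2 i j hij,
        pfun_integral_r2 x hr2 j i (Ne.symm hij)]
  -- the key identity
  set T := ∑ i, ∑ j, (x i - x j) * (g i - g j) with hT
  have hid : T = 2 * r * (∑ i, x i * g i) - 2 := by
    rw [hT, double_sum_identity x g, hxsum, hg1]; ring
  have hterm_nonpos : ∀ i j, (x i - x j) * (g i - g j) ≤ 0 := by
    intro i j
    rcases le_total (x j) (x i) with h | h
    · have := hmono i j h
      exact mul_nonpos_of_nonneg_of_nonpos (by linarith) (by linarith)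
    · have := hmono j i h
      exact mul_nonpos_of_nonpos_of_nonneg (by linarith) (by linarith)
  have hTle : T ≤ 0 := by
    apply Finset.sum_nonpos
    intro i _
    exact Finset.sum_nonpos fun j _ => hterm_nonpos i j
  have hmain : ∑ i, x i * g i ≤ 1 / r := by
    rw [le_div_iff₀ hrpos]
    nlinarith
  refine ⟨hmain, ?_, ?_⟩
  · intro hr2
    have hT0 : T = 0 := by
      rw [hT]
      apply Finset.sum_eq_zero
      intro i _
      apply Finset.sum_eq_zero
      intro j _
      rw [hr2eq hr2 i j]
      ring
    rw [eq_div_iff hrpos.ne']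
    nlinarith
  · intro hr3
    constructor
    · intro heq
      by_contra hnall
      push_neg at hnall
      -- there exist i j with x j < x i
      have hexlt : ∃ i j : Fin r, x j < x i := by
        by_contra hno
        push_neg at hno
        have halleq : ∀ i j : Fin r, x i = x j :=
          fun i j => le_antisymm (hno i j) (hno j i)
        obtain ⟨i0, hi0⟩ := hnall
        have : ∑ j, x j = r * x i0 := by
          rw [Finset.sum_congr rfl (fun j _ => halleq j i0), Finset.sum_const,
            Finset.card_univ, Fintype.card_fin, nsmul_eq_mul]
        apply hi0
        rw [eq_div_iff hrpos.ne']
        rw [hxsum] at this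
        linarith
      obtain ⟨i0, j0, hlt⟩ := hexlt
      have hgij := hstrict hr3 i0 j0 hlt
      have hTneg : T < 0 := by
        rw [hT]
        have houter : ∀ i, ∑ j, (x i - x j) * (g i - g j) ≤ 0 :=
          fun i => Finset.sum_nonpos fun j _ => hterm_nonpos i j
        have hi0neg : ∑ j, (x i0 - x j) * (g i0 - g j) < 0 := by
          have hterm : (x i0 - x j0) * (g i0 - g j0) < 0 :=
            mul_neg_of_pos_of_neg (by linarith) (by linarith)
          have : ∑ j, (x i0 - x j) * (g i0 - g j) < ∑ _j : Fin r, (0:ℝ) :=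
            Finset.sum_lt_sum (fun j _ => hterm_nonpos i0 j)
              ⟨j0, Finset.mem_univ j0, by simpa using hterm⟩
          simpa using this
        have : ∑ i, ∑ j, (x i - x j) * (g i - g j) < ∑ _i : Fin r, (0:ℝ) :=
          Finset.sum_lt_sum (fun i _ => houter i)
            ⟨i0, Finset.mem_univ i0, by simpa using hi0neg⟩
        simpa using this
      have : ∑ i, x i * g i < 1 / r := by
        rw [lt_div_iff₀ hrpos]
        nlinarith
      linarith [heq ▸ this]
    · intro hall
      have hT0 : T = 0 := by
        rw [hT]
        apply Finset.sum_eq_zero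
        intro i _
        apply Finset.sum_eq_zero
        intro j _
        rw [hall i, hall j]
        ring
      rw [eq_div_iff hrpos.ne']
      nlinarith


end ThompsonStability
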